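/- arXiv:2603.12405 — 2 statements merged into one kernel-verified Lean document; each statement's English description precedes it below -/
import Mathlib

section
/- The matrix U_n is unitary and satisfies (⟨0|⊗⟨0|⊗⟨0|⊗I_N) U_n (|0⟩⊗|0⟩⊗|0⟩⊗I_N) = L̃_n; that is, U_n is an exact (1, 3, 0)-block encoding of the scaled one-dimensional Neumann Laplacian L̃_n. -/
open Matrix
open scoped Kronecker

noncomputable section

instance instNeZeroPow2 (n : ℕ) : NeZero (2 ^ n) := ⟨pow_ne_zero n two_ne_zero⟩

/-- Cyclic left shift: `Sm • e_j = e_{j-1 mod N}`, i.e. `(Sm)_{i j} = [i = j - 1]`. -/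
def Sm (N : ℕ) [NeZero N] : Matrix (Fin N) (Fin N) ℂ :=
  Matrix.of fun i j => if i = j - 1 then 1 else 0

/-- Cyclic right shift: `Sp • e_j = e_{j+1 mod N}`. -/
def Sp (N : ℕ) [NeZero N] : Matrix (Fin N) (Fin N) ℂ :=
  Matrix.of fun i j => if i = j + 1 then 1 else 0

/-- The index `N - 1` of the last grid point. -/
def fLast (N : ℕ) [NeZero N] : Fin N := ⟨N - 1, Nat.sub_lt (Nat.pos_of_neZero N) Nat.one_pos⟩

def Hgate : Matrix (Fin 2) (Fin 2) ℂ := ((1 / Real.sqrt 2 : ℝ) : ℂ) • !![1, 1; 1, -1]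
def Zgate : Matrix (Fin 2) (Fin 2) ℂ := !![1, 0; 0, -1]
def Xgate : Matrix (Fin 2) (Fin 2) ℂ := !![0, 1; 1, 0]
def P0 : Matrix (Fin 2) (Fin 2) ℂ := !![1, 0; 0, 0]
def P1 : Matrix (Fin 2) (Fin 2) ℂ := !![0, 0; 0, 1]

/-- Controlled flip `F(Q) = X ⊗ Q + I₂ ⊗ (I − Q)` for a projector `Q`. -/
def Fctrl {α : Type*} [DecidableEq α] [Fintype α] (Q : Matrix α α ℂ) :
    Matrix (Fin 2 × α) (Fin 2 × α) ℂ :=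
  Xgate ⊗ₖ Q + (1 : Matrix (Fin 2) (Fin 2) ℂ) ⊗ₖ ((1 : Matrix α α ℂ) - Q)

/-- `C₋ = I₂ ⊗ (|0⟩⟨0| ⊗ I₂ ⊗ S⁻ + |1⟩⟨1| ⊗ I₂ ⊗ I_N)` on `del, ℓ₁, ℓ₀, j`. -/
def Cminus3 (N : ℕ) [NeZero N] :
    Matrix (Fin 2 × Fin 2 × Fin 2 × Fin N) (Fin 2 × Fin 2 × Fin 2 × Fin N) ℂ :=
  (1 : Matrix (Fin 2) (Fin 2) ℂ) ⊗ₖ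
    (P0 ⊗ₖ ((1 : Matrix (Fin 2) (Fin 2) ℂ) ⊗ₖ Sm N) +
     P1 ⊗ₖ ((1 : Matrix (Fin 2) (Fin 2) ℂ) ⊗ₖ (1 : Matrix (Fin N) (Fin N) ℂ)))

/-- `C₊ = I₂ ⊗ I₂ ⊗ (|1⟩⟨1| ⊗ S⁺ + |0⟩⟨0| ⊗ I_N)` on `del, ℓ₁, ℓ₀, j`. -/
def Cplus3 (N : ℕ) [NeZero N] :
    Matrix (Fin 2 × Fin 2 × Fin 2 × Fin N) (Fin 2 × Fin 2 × Fin 2 × Fin N) ℂ :=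
  (1 : Matrix (Fin 2) (Fin 2) ℂ) ⊗ₖ ((1 : Matrix (Fin 2) (Fin 2) ℂ) ⊗ₖ
    (P1 ⊗ₖ Sp N + P0 ⊗ₖ (1 : Matrix (Fin N) (Fin N) ℂ)))

/-- `B₀ = F(|0⟩⟨0| ⊗ |0⟩⟨0| ⊗ e₀e₀ᵀ)`. -/
def B00 (N : ℕ) [NeZero N] :
    Matrix (Fin 2 × Fin 2 × Fin 2 × Fin N) (Fin 2 × Fin 2 × Fin 2 × Fin N) ℂ :=
  Fctrl (P0 ⊗ₖ (P0 ⊗ₖ Matrix.single (0 : Fin N) (0 : Fin N) (1 : ℂ)))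

/-- `B₂ = F(|0⟩⟨0| ⊗ |1⟩⟨1| ⊗ e₀e₀ᵀ)`. -/
def B01 (N : ℕ) [NeZero N] :
    Matrix (Fin 2 × Fin 2 × Fin 2 × Fin N) (Fin 2 × Fin 2 × Fin 2 × Fin N) ℂ :=
  Fctrl (P0 ⊗ₖ (P1 ⊗ₖ Matrix.single (0 : Fin N) (0 : Fin N) (1 : ℂ)))

/-- `B_{N−1} = F(|1⟩⟨1| ⊗ |1⟩⟨1| ⊗ e_{N−1}e_{N−1}ᵀ)`. -/
def B11L (N : ℕ) [NeZero N] :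
    Matrix (Fin 2 × Fin 2 × Fin 2 × Fin N) (Fin 2 × Fin 2 × Fin 2 × Fin N) ℂ :=
  Fctrl (P1 ⊗ₖ (P1 ⊗ₖ Matrix.single (fLast N) (fLast N) (1 : ℂ)))

/-- `B₄ = F(|0⟩⟨0| ⊗ |1⟩⟨1| ⊗ e_{N−1}e_{N−1}ᵀ)`. -/
def B01L (N : ℕ) [NeZero N] :
    Matrix (Fin 2 × Fin 2 × Fin 2 × Fin N) (Fin 2 × Fin 2 × Fin 2 × Fin N) ℂ :=
  Fctrl (P0 ⊗ₖ (P1 ⊗ₖ Matrix.single (fLast N) (fLast N) (1 : ℂ)))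

/-- `I₂ ⊗ A ⊗ A ⊗ I_N` for a single-qubit gate `A`. -/
def sandwich (N : ℕ) [NeZero N] (A : Matrix (Fin 2) (Fin 2) ℂ) :
    Matrix (Fin 2 × Fin 2 × Fin 2 × Fin N) (Fin 2 × Fin 2 × Fin 2 × Fin N) ℂ :=
  (1 : Matrix (Fin 2) (Fin 2) ℂ) ⊗ₖ (A ⊗ₖ (A ⊗ₖ (1 : Matrix (Fin N) (Fin N) ℂ)))

/-- `U_d = (I₂⊗H⊗H⊗I) · C₊ · C₋ · B_{N−1} · B₀ · (I₂⊗Z⊗Z⊗I) · (I₂⊗H⊗H⊗I)`. -/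
def Ud (N : ℕ) [NeZero N] :
    Matrix (Fin 2 × Fin 2 × Fin 2 × Fin N) (Fin 2 × Fin 2 × Fin 2 × Fin N) ℂ :=
  sandwich N Hgate * Cplus3 N * Cminus3 N * B11L N * B00 N * sandwich N Zgate * sandwich N Hgate

/-- `U_n = (I₂⊗H⊗H⊗I) · C₊ · C₋ · B₄ · B₃ · B₂ · B₁ · (I₂⊗Z⊗Z⊗I) · (I₂⊗H⊗H⊗I)`. -/
def Un (N : ℕ) [NeZero N] :
    Matrix (Fin 2 × Fin 2 × Fin 2 × Fin N) (Fin 2 × Fin 2 × Fin 2 × Fin N) ℂ :=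
  sandwich N Hgate * Cplus3 N * Cminus3 N * B01L N * B11L N * B01 N * B00 N *
    sandwich N Zgate * sandwich N Hgate

/-- The scaled 1D periodic Laplacian `L̃_p = (1/4)(S⁻ + S⁺ − 2 I)`. -/
def Lper (N : ℕ) [NeZero N] : Matrix (Fin N) (Fin N) ℂ :=
  (1 / 4 : ℂ) • (Sm N + Sp N - (2 : ℂ) • (1 : Matrix (Fin N) (Fin N) ℂ))

/-- The scaled 1D Dirichlet Laplacian. -/
def Ldir (N : ℕ) [NeZero N] : Matrix (Fin N) (Fin N) ℂ :=
  Lper N - (1 / 4 : ℂ) •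
    (Matrix.single (0 : Fin N) (fLast N) (1 : ℂ) +
     Matrix.single (fLast N) (0 : Fin N) (1 : ℂ))

/-- The scaled 1D Neumann Laplacian. -/
def Lneu (N : ℕ) [NeZero N] : Matrix (Fin N) (Fin N) ℂ :=
  Ldir N + (1 / 4 : ℂ) •
    (Matrix.single (0 : Fin N) (0 : Fin N) (1 : ℂ) +
     Matrix.single (fLast N) (fLast N) (1 : ℂ))

lemma fin2 (M M' : Matrix (Fin 2) (Fin 2) ℂ) (h : ∀ i j, M i j = M' i j) : M = M' := by
  ext i j; exact h i j
lemma P0_mul_P0 : P0 * P0 = P0 := by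
  ext i j; fin_cases i <;> fin_cases j <;> simp [P0, Matrix.mul_apply, Fin.sum_univ_two]
lemma P0_mul_P1 : P0 * P1 = 0 := by
  ext i j; fin_cases i <;> fin_cases j <;> simp [P0, P1, Matrix.mul_apply, Fin.sum_univ_two]
lemma P1_mul_P0 : P1 * P0 = 0 := by
  ext i j; fin_cases i <;> fin_cases j <;> simp [P0, P1, Matrix.mul_apply, Fin.sum_univ_two]
lemma P1_mul_P1 : P1 * P1 = P1 := by
  ext i j; fin_cases i <;> fin_cases j <;> simp [P1, Matrix.mul_apply, Fin.sum_univ_two]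
lemma P0_add_P1 : P0 + P1 = 1 := by
  ext i j; fin_cases i <;> fin_cases j <;> simp [P0, P1, Matrix.one_apply]
lemma X_mul_X : Xgate * Xgate = 1 := by
  ext i j; fin_cases i <;> fin_cases j <;>
    simp [Xgate, Matrix.mul_apply, Fin.sum_univ_two, Matrix.one_apply]
section shifts
variable (N : ℕ) [NeZero N]

lemma fLast_add_one : fLast N + 1 = 0 := by
  apply Fin.ext
  simp [fLast, Fin.add_def, Nat.sub_add_cancel (Nat.one_le_iff_ne_zero.mpr (NeZero.ne N))]

lemma zero_sub_one_eq : (0 : Fin N) - 1 = fLast N := by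
  rw [sub_eq_iff_eq_add, fLast_add_one N]

lemma Sp_mul_Sm : Sp N * Sm N = 1 := by
  ext i j
  rw [Matrix.mul_apply]
  simp only [Sp, Sm, Matrix.of_apply, mul_ite, mul_one, mul_zero]
  rw [Finset.sum_ite_eq' Finset.univ (j - 1) (fun k => if i = k + 1 then (1:ℂ) else 0)]
  simp [Matrix.one_apply]

lemma Sm_mul_Sp : Sm N * Sp N = 1 := by
  ext i j
  rw [Matrix.mul_apply]
  simp only [Sp, Sm, Matrix.of_apply, mul_ite, mul_one, mul_zero]
  rw [Finset.sum_ite_eq' Finset.univ (j + 1) (fun k => if i = k - 1 then (1:ℂ) else 0)]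
  simp [Matrix.one_apply, add_sub_cancel_right]

lemma Sm_mul_E00 : Sm N * Matrix.single (0 : Fin N) (0 : Fin N) (1 : ℂ)
    = Matrix.single (fLast N) (0 : Fin N) (1 : ℂ) := by
  ext i j
  rw [Matrix.mul_apply]
  simp only [Matrix.single, Sm, Matrix.of_apply, mul_ite, mul_one, mul_zero]
  rw [Finset.sum_congr rfl (fun k _ => show
      (if (0:Fin N) = k ∧ (0:Fin N) = j then (if i = k - 1 then (1:ℂ) else 0) else 0)
      = if (0:Fin N) = k then (if (0:Fin N) = j then (if i = k - 1 then (1:ℂ) else 0) else 0) else 0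
      from by by_cases h1 : (0:Fin N) = k <;> by_cases h2 : (0:Fin N) = j <;> simp [h1, h2])]
  rw [Finset.sum_ite_eq Finset.univ (0 : Fin N)]
  simp only [Finset.mem_univ, if_true, zero_sub_one_eq]
  by_cases h1 : i = fLast N <;> by_cases h2 : (0:Fin N) = j <;> simp [h1, h2, eq_comm]

lemma Sp_mul_ELL : Sp N * Matrix.single (fLast N) (fLast N) (1 : ℂ)
    = Matrix.single (0 : Fin N) (fLast N) (1 : ℂ) := by
  ext i j
  rw [Matrix.mul_apply]
  simp only [Matrix.single, Sp, Matrix.of_apply, mul_ite, mul_one, mul_zero]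
  rw [Finset.sum_congr rfl (fun k _ => show
      (if fLast N = k ∧ fLast N = j then (if i = k + 1 then (1:ℂ) else 0) else 0)
      = if fLast N = k then (if fLast N = j then (if i = k + 1 then (1:ℂ) else 0) else 0) else 0
      from by by_cases h1 : fLast N = k <;> by_cases h2 : fLast N = j <;> simp [h1, h2])]
  rw [Finset.sum_ite_eq Finset.univ (fLast N)]
  simp only [Finset.mem_univ, if_true, fLast_add_one]
  by_cases h1 : i = 0 <;> by_cases h2 : fLast N = j <;> simp [h1, h2, eq_comm]

end shifts
-- conjTranspose lemmas
lemma kron_conjT {α β : Type*} [Fintype α] [Fintype β] (A : Matrix α α ℂ) (B : Matrix β β ℂ) :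
    (A ⊗ₖ B)ᴴ = Aᴴ ⊗ₖ Bᴴ := by
  ext ⟨i1, i2⟩ ⟨j1, j2⟩
  simp [Matrix.conjTranspose_apply, Matrix.kroneckerMap_apply, mul_comm]

lemma Hgate_conjT : Hgateᴴ = Hgate := by
  ext i j; fin_cases i <;> fin_cases j <;> simp [Hgate, Matrix.conjTranspose_apply]
lemma Zgate_conjT : Zgateᴴ = Zgate := by
  ext i j; fin_cases i <;> fin_cases j <;> simp [Zgate, Matrix.conjTranspose_apply]
lemma Xgate_conjT : Xgateᴴ = Xgate := by
  ext i j; fin_cases i <;> fin_cases j <;> simp [Xgate, Matrix.conjTranspose_apply]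
lemma P0_conjT : P0ᴴ = P0 := by
  ext i j; fin_cases i <;> fin_cases j <;> simp [P0, Matrix.conjTranspose_apply]
lemma P1_conjT : P1ᴴ = P1 := by
  ext i j; fin_cases i <;> fin_cases j <;> simp [P1, Matrix.conjTranspose_apply]

lemma E_conjT {α : Type*} [DecidableEq α] [Fintype α] (k : α) :
    (Matrix.single k k (1:ℂ))ᴴ = Matrix.single k k (1:ℂ) := by
  ext i j
  simp only [Matrix.conjTranspose_apply, Matrix.single, Matrix.of_apply]
  by_cases h1 : k = i <;> by_cases h2 : k = j <;> simp [h1, h2]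

lemma Sm_conjT (N : ℕ) [NeZero N] : (Sm N)ᴴ = Sp N := by
  ext i j
  simp only [Matrix.conjTranspose_apply, Sm, Sp, Matrix.of_apply]
  by_cases h : j = i - 1
  · simp [h, sub_add_cancel]
  · have h2 : i ≠ j + 1 := fun hi => h (by rw [hi, add_sub_cancel_right])
    simp [h, h2]

lemma Sp_conjT (N : ℕ) [NeZero N] : (Sp N)ᴴ = Sm N := by
  rw [← Sm_conjT N, Matrix.conjTranspose_conjTranspose]

lemma sqrt2_inv_sq : ((Real.sqrt 2:ℝ):ℂ)⁻¹ * ((Real.sqrt 2:ℝ):ℂ)⁻¹ = 1/2 := by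
  have h : Real.sqrt 2 * Real.sqrt 2 = 2 := Real.mul_self_sqrt (by norm_num)
  rw [← Complex.ofReal_inv, ← Complex.ofReal_mul, ← mul_inv, h]
  norm_num

lemma Hgate_mul_Hgate : Hgate * Hgate = 1 := by
  ext i j
  fin_cases i <;> fin_cases j <;>
    simp [Hgate, Matrix.mul_apply, Fin.sum_univ_two, Matrix.one_apply] <;>
    rw [sqrt2_inv_sq] <;> norm_num
lemma Zgate_mul_Zgate : Zgate * Zgate = 1 := by
  ext i j
  fin_cases i <;> fin_cases j <;>
    simp [Zgate, Matrix.mul_apply, Fin.sum_univ_two, Matrix.one_apply]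

-- kronecker sub lemmas
lemma kron_sub {α β : Type*} [Fintype α] [Fintype β] (A : Matrix α α ℂ) (B C : Matrix β β ℂ) :
    A ⊗ₖ (B - C) = A ⊗ₖ B - A ⊗ₖ C := by
  ext ⟨i1, i2⟩ ⟨j1, j2⟩
  simp [Matrix.kroneckerMap_apply, mul_sub]

lemma sub_kron {α β : Type*} [Fintype α] [Fintype β] (A B : Matrix α α ℂ) (C : Matrix β β ℂ) :
    (A - B) ⊗ₖ C = A ⊗ₖ C - B ⊗ₖ C := by
  ext ⟨i1, i2⟩ ⟨j1, j2⟩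
  simp [Matrix.kroneckerMap_apply, sub_mul]

-- unitarity of Fctrl
lemma Fctrl_conjT {α : Type*} [DecidableEq α] [Fintype α] (Q : Matrix α α ℂ)
    (hQ : Qᴴ = Q) : (Fctrl Q)ᴴ = Fctrl Q := by
  simp only [Fctrl, Matrix.conjTranspose_add, kron_conjT, Xgate_conjT, hQ,
    Matrix.conjTranspose_one, Matrix.conjTranspose_sub]

lemma Fctrl_mem {α : Type*} [DecidableEq α] [Fintype α] (Q : Matrix α α ℂ)
    (hQ : Qᴴ = Q) (hidem : Q * Q = Q) :
    Fctrl Q ∈ Matrix.unitaryGroup (Fin 2 × α) ℂ := by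
  have h1 : Q * (1 - Q) = 0 := by rw [mul_sub, mul_one, hidem, sub_self]
  have h2 : (1 - Q) * Q = 0 := by rw [sub_mul, one_mul, hidem, sub_self]
  have h3 : (1 - Q) * (1 - Q) = 1 - Q := by rw [sub_mul, one_mul, h1, sub_zero]
  rw [Matrix.mem_unitaryGroup_iff]
  show Fctrl Q * (Fctrl Q)ᴴ = 1
  rw [Fctrl_conjT Q hQ]
  simp only [Fctrl, Matrix.add_mul, Matrix.mul_add, ← Matrix.mul_kronecker_mul, X_mul_X,
    Matrix.one_mul, Matrix.mul_one, hidem, h1, h2, h3, Matrix.kronecker_zero,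
    add_zero, zero_add]
  rw [← Matrix.kronecker_add, show Q + (1 - Q) = (1 : Matrix α α ℂ) from by abel,
    Matrix.one_kronecker_one]

-- unitarity of kron products
lemma kron_mem {α β : Type*} [DecidableEq α] [Fintype α] [DecidableEq β] [Fintype β]
    (A : Matrix α α ℂ) (B : Matrix β β ℂ)
    (hA : A ∈ Matrix.unitaryGroup α ℂ) (hB : B ∈ Matrix.unitaryGroup β ℂ) :
    A ⊗ₖ B ∈ Matrix.unitaryGroup (α × β) ℂ := by
  rw [Matrix.mem_unitaryGroup_iff]
  show (A ⊗ₖ B) * (A ⊗ₖ B)ᴴ = 1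
  rw [Matrix.mem_unitaryGroup_iff] at hA hB
  rw [kron_conjT, ← Matrix.mul_kronecker_mul, show A * Aᴴ = 1 from hA,
    show B * Bᴴ = 1 from hB, Matrix.one_kronecker_one]
section unit
variable (N : ℕ) [NeZero N]

lemma one_mem_unitary {α : Type*} [DecidableEq α] [Fintype α] :
    (1 : Matrix α α ℂ) ∈ Matrix.unitaryGroup α ℂ := Submonoid.one_mem _

lemma Hgate_mem : Hgate ∈ Matrix.unitaryGroup (Fin 2) ℂ := by
  rw [Matrix.mem_unitaryGroup_iff]
  show Hgate * Hgateᴴ = 1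
  rw [Hgate_conjT, Hgate_mul_Hgate]

lemma Zgate_mem : Zgate ∈ Matrix.unitaryGroup (Fin 2) ℂ := by
  rw [Matrix.mem_unitaryGroup_iff]
  show Zgate * Zgateᴴ = 1
  rw [Zgate_conjT, Zgate_mul_Zgate]

lemma sandwich_mem (A : Matrix (Fin 2) (Fin 2) ℂ) (hA : A ∈ Matrix.unitaryGroup (Fin 2) ℂ) :
    sandwich N A ∈ Matrix.unitaryGroup (Fin 2 × Fin 2 × Fin 2 × Fin N) ℂ :=
  kron_mem _ _ (one_mem_unitary) (kron_mem _ _ hA (kron_mem _ _ hA (one_mem_unitary)))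

lemma Cminus3_mem : Cminus3 N ∈ Matrix.unitaryGroup (Fin 2 × Fin 2 × Fin 2 × Fin N) ℂ := by
  rw [Matrix.mem_unitaryGroup_iff]
  show Cminus3 N * (Cminus3 N)ᴴ = 1
  simp only [Cminus3, kron_conjT, Matrix.conjTranspose_add, Matrix.conjTranspose_one,
    P0_conjT, P1_conjT, Sm_conjT, Matrix.mul_add, Matrix.add_mul, ← Matrix.mul_kronecker_mul,
    P0_mul_P0, P0_mul_P1, P1_mul_P0, P1_mul_P1, Sm_mul_Sp, Matrix.one_mul, Matrix.mul_one,
    Matrix.zero_kronecker, Matrix.kronecker_zero, add_zero, zero_add]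
  rw [← Matrix.add_kronecker, P0_add_P1, Matrix.one_kronecker_one, Matrix.one_kronecker_one,
    Matrix.one_kronecker_one]

lemma Cplus3_mem : Cplus3 N ∈ Matrix.unitaryGroup (Fin 2 × Fin 2 × Fin 2 × Fin N) ℂ := by
  rw [Matrix.mem_unitaryGroup_iff]
  show Cplus3 N * (Cplus3 N)ᴴ = 1
  simp only [Cplus3, kron_conjT, Matrix.conjTranspose_add, Matrix.conjTranspose_one,
    P0_conjT, P1_conjT, Sp_conjT, Matrix.mul_add, Matrix.add_mul, ← Matrix.mul_kronecker_mul,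
    P0_mul_P0, P0_mul_P1, P1_mul_P0, P1_mul_P1, Sp_mul_Sm, Matrix.one_mul, Matrix.mul_one,
    Matrix.zero_kronecker, Matrix.kronecker_zero, add_zero, zero_add]
  rw [← Matrix.add_kronecker, show P1 + P0 = P0 + P1 from add_comm _ _, P0_add_P1,
    Matrix.one_kronecker_one, Matrix.one_kronecker_one, Matrix.one_kronecker_one]

omit [NeZero N] in
lemma projQ_conjT (A B : Matrix (Fin 2) (Fin 2) ℂ) (hA : Aᴴ = A) (hB : Bᴴ = B) (k : Fin N) :
    (A ⊗ₖ (B ⊗ₖ Matrix.single k k (1:ℂ)))ᴴ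
      = A ⊗ₖ (B ⊗ₖ Matrix.single k k (1:ℂ)) := by
  rw [kron_conjT, kron_conjT, hA, hB, E_conjT]

omit [NeZero N] in
lemma projQ_idem (A B : Matrix (Fin 2) (Fin 2) ℂ) (hA : A * A = A) (hB : B * B = B) (k : Fin N) :
    (A ⊗ₖ (B ⊗ₖ Matrix.single k k (1:ℂ))) * (A ⊗ₖ (B ⊗ₖ Matrix.single k k (1:ℂ)))
      = A ⊗ₖ (B ⊗ₖ Matrix.single k k (1:ℂ)) := by
  rw [← Matrix.mul_kronecker_mul, ← Matrix.mul_kronecker_mul, hA, hB,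
    Matrix.single_mul_single_same, mul_one]

lemma B00_mem : B00 N ∈ Matrix.unitaryGroup (Fin 2 × Fin 2 × Fin 2 × Fin N) ℂ :=
  Fctrl_mem _ (projQ_conjT N _ _ P0_conjT P0_conjT _) (projQ_idem N _ _ P0_mul_P0 P0_mul_P0 _)
lemma B01_mem : B01 N ∈ Matrix.unitaryGroup (Fin 2 × Fin 2 × Fin 2 × Fin N) ℂ :=
  Fctrl_mem _ (projQ_conjT N _ _ P0_conjT P1_conjT _) (projQ_idem N _ _ P0_mul_P0 P1_mul_P1 _)
lemma B11L_mem : B11L N ∈ Matrix.unitaryGroup (Fin 2 × Fin 2 × Fin 2 × Fin N) ℂ :=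
  Fctrl_mem _ (projQ_conjT N _ _ P1_conjT P1_conjT _) (projQ_idem N _ _ P1_mul_P1 P1_mul_P1 _)
lemma B01L_mem : B01L N ∈ Matrix.unitaryGroup (Fin 2 × Fin 2 × Fin 2 × Fin N) ℂ :=
  Fctrl_mem _ (projQ_conjT N _ _ P0_conjT P1_conjT _) (projQ_idem N _ _ P0_mul_P0 P1_mul_P1 _)

lemma Un_mem : Un N ∈ Matrix.unitaryGroup (Fin 2 × Fin 2 × Fin 2 × Fin N) ℂ := by
  unfold Un
  exact mul_mem (mul_mem (mul_mem (mul_mem (mul_mem (mul_mem (mul_mem (mul_mem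
    (sandwich_mem N _ Hgate_mem) (Cplus3_mem N)) (Cminus3_mem N)) (B01L_mem N)) (B11L_mem N))
    (B01_mem N)) (B00_mem N)) (sandwich_mem N _ Zgate_mem)) (sandwich_mem N _ Hgate_mem)

end unit
section stages
variable (N : ℕ) [NeZero N]

def E00' : Matrix (Fin N) (Fin N) ℂ := Matrix.single (0 : Fin N) (0 : Fin N) (1 : ℂ)
def ELL' : Matrix (Fin N) (Fin N) ℂ := Matrix.single (fLast N) (fLast N) (1 : ℂ)
def EL0' : Matrix (Fin N) (Fin N) ℂ := Matrix.single (fLast N) (0 : Fin N) (1 : ℂ)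
def E0L' : Matrix (Fin N) (Fin N) ℂ := Matrix.single (0 : Fin N) (fLast N) (1 : ℂ)

def Qtot : Matrix (Fin 2 × Fin 2 × Fin N) (Fin 2 × Fin 2 × Fin N) ℂ :=
  P0 ⊗ₖ (P0 ⊗ₖ E00' N) + (P0 ⊗ₖ (P1 ⊗ₖ E00' N) +
    (P1 ⊗ₖ (P1 ⊗ₖ ELL' N) + P0 ⊗ₖ (P1 ⊗ₖ ELL' N)))

def Tmat : Matrix (Fin 2 × Fin 2 × Fin N) (Fin 2 × Fin 2 × Fin N) ℂ :=
  P0 ⊗ₖ (P0 ⊗ₖ Sm N) + (P0 ⊗ₖ (P1 ⊗ₖ (1 : Matrix (Fin N) (Fin N) ℂ)) +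
    (P1 ⊗ₖ (P0 ⊗ₖ (1 : Matrix (Fin N) (Fin N) ℂ)) + P1 ⊗ₖ (P1 ⊗ₖ Sp N)))

def TQ : Matrix (Fin 2 × Fin 2 × Fin N) (Fin 2 × Fin 2 × Fin N) ℂ :=
  P0 ⊗ₖ (P0 ⊗ₖ EL0' N) + (P0 ⊗ₖ (P1 ⊗ₖ E00' N) +
    (P1 ⊗ₖ (P1 ⊗ₖ E0L' N) + P0 ⊗ₖ (P1 ⊗ₖ ELL' N)))

omit [NeZero N] in
lemma Fctrl_mul_Fctrl {α : Type*} [DecidableEq α] [Fintype α] (Q Q' : Matrix α α ℂ)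
    (h1 : Q * Q' = 0) (h2 : Q' * Q = 0) :
    Fctrl Q * Fctrl Q' = Fctrl (Q + Q') := by
  have e1 : Q * (1 - Q') = Q := by rw [mul_sub, mul_one, h1, sub_zero]
  have e2 : (1 - Q) * Q' = Q' := by rw [sub_mul, one_mul, h1, sub_zero]
  have e3 : (1 - Q) * (1 - Q') = 1 - (Q + Q') := by
    rw [sub_mul, one_mul, e1]; abel
  simp only [Fctrl, Matrix.add_mul, Matrix.mul_add, ← Matrix.mul_kronecker_mul, X_mul_X,
    Matrix.one_mul, Matrix.mul_one, h1, e1, e2, e3, Matrix.kronecker_zero, zero_add, add_zero]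
  rw [← add_assoc, ← Matrix.kronecker_add, add_comm Q' Q]

omit [NeZero N] in
lemma E_mul_E_ne {k l : Fin N} (h : k ≠ l) :
    Matrix.single k k (1:ℂ) * Matrix.single l l (1:ℂ) = 0 := by
  ext i j
  rw [Matrix.mul_apply]
  apply Finset.sum_eq_zero
  intro x _
  simp only [Matrix.single, Matrix.of_apply, Matrix.zero_apply]
  split_ifs with c1 c2
  · exact absurd (c1.2.trans c2.1.symm) h
  all_goals simp

lemma stageA (hL : fLast N ≠ 0) :
    B01L N * B11L N * B01 N * B00 N = Fctrl (Qtot N) := by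
  have hL' : (0 : Fin N) ≠ fLast N := fun h => hL h.symm
  unfold B01L B11L B01 B00
  rw [Fctrl_mul_Fctrl, Fctrl_mul_Fctrl, Fctrl_mul_Fctrl]
  · unfold Qtot E00' ELL'
    congr 1
    abel
  all_goals
    simp only [Matrix.add_mul, Matrix.mul_add, ← Matrix.mul_kronecker_mul,
      P0_mul_P0, P0_mul_P1, P1_mul_P0, P1_mul_P1,
      Matrix.single_mul_single_same, mul_one,
      E_mul_E_ne N hL, E_mul_E_ne N hL',
      Matrix.zero_kronecker, Matrix.kronecker_zero, add_zero, zero_add]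

lemma stageB : Cplus3 N * Cminus3 N = (1 : Matrix (Fin 2) (Fin 2) ℂ) ⊗ₖ Tmat N := by
  unfold Cplus3 Cminus3 Tmat
  simp only [Matrix.mul_add, Matrix.add_mul, ← Matrix.mul_kronecker_mul,
    P0_mul_P0, P0_mul_P1, P1_mul_P0, P1_mul_P1, Sp_mul_Sm,
    Matrix.one_mul, Matrix.mul_one, Matrix.zero_kronecker, Matrix.kronecker_zero,
    add_zero, zero_add, Matrix.kronecker_add, Matrix.add_kronecker]
  abel

lemma stageC : Tmat N * Qtot N = TQ N := by
  unfold Tmat Qtot TQ E00' ELL' EL0' E0L'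
  simp only [Matrix.mul_add, Matrix.add_mul, ← Matrix.mul_kronecker_mul,
    P0_mul_P0, P0_mul_P1, P1_mul_P0, P1_mul_P1,
    Matrix.one_mul, Matrix.mul_one, Sm_mul_E00, Sp_mul_ELL,
    Matrix.zero_kronecker, Matrix.kronecker_zero, add_zero, zero_add]

lemma midM : ((1 : Matrix (Fin 2) (Fin 2) ℂ) ⊗ₖ Tmat N) * Fctrl (Qtot N)
    = Xgate ⊗ₖ TQ N + (1 : Matrix (Fin 2) (Fin 2) ℂ) ⊗ₖ (Tmat N - TQ N) := by
  simp only [Fctrl, Matrix.mul_add, ← Matrix.mul_kronecker_mul, Matrix.one_mul, Matrix.mul_one,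
    mul_sub, stageC]

lemma sandwichZH : sandwich N Zgate * sandwich N Hgate
    = (1 : Matrix (Fin 2) (Fin 2) ℂ) ⊗ₖ ((Zgate * Hgate) ⊗ₖ ((Zgate * Hgate) ⊗ₖ
        (1 : Matrix (Fin N) (Fin N) ℂ))) := by
  unfold sandwich
  rw [← Matrix.mul_kronecker_mul, ← Matrix.mul_kronecker_mul, ← Matrix.mul_kronecker_mul,
    Matrix.one_mul, Matrix.one_mul]

end stages
section final
variable (N : ℕ) [NeZero N]

lemma blk (A B C : Matrix (Fin 2) (Fin 2) ℂ) (D : Matrix (Fin N) (Fin N) ℂ) :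
    (A ⊗ₖ (B ⊗ₖ (C ⊗ₖ D))).submatrix
        (fun i : Fin N => ((0 : Fin 2), (0 : Fin 2), (0 : Fin 2), i))
        (fun j : Fin N => ((0 : Fin 2), (0 : Fin 2), (0 : Fin 2), j))
      = (A 0 0 * (B 0 0 * C 0 0)) • D := by
  ext i j
  simp [Matrix.submatrix_apply, Matrix.kroneckerMap_apply, Matrix.smul_apply]
  ring

lemma key (hL : fLast N ≠ 0) :
    Un N = sandwich N Hgate *
      ((Xgate ⊗ₖ TQ N + (1 : Matrix (Fin 2) (Fin 2) ℂ) ⊗ₖ (Tmat N - TQ N)) *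
        ((1 : Matrix (Fin 2) (Fin 2) ℂ) ⊗ₖ ((Zgate * Hgate) ⊗ₖ ((Zgate * Hgate) ⊗ₖ
          (1 : Matrix (Fin N) (Fin N) ℂ))))) := by
  unfold Un
  rw [← sandwichZH, ← midM]
  rw [← stageB, ← stageA N hL]
  simp only [Matrix.mul_assoc]
lemma Xgate_00 : Xgate 0 0 = 0 := rfl

lemma HP0ZH_00 : (Hgate * (P0 * (Zgate * Hgate))) 0 0 = 1/2 := by
  simp [Hgate, P0, Zgate, Matrix.mul_apply, Fin.sum_univ_two]
  rw [sqrt2_inv_sq]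
  norm_num

lemma HP1ZH_00 : (Hgate * (P1 * (Zgate * Hgate))) 0 0 = -(1/2) := by
  simp [Hgate, P1, Zgate, Matrix.mul_apply, Fin.sum_univ_two]
  rw [sqrt2_inv_sq]
  norm_num

set_option maxHeartbeats 1000000 in
lemma block (hL : fLast N ≠ 0) :
    (Un N).submatrix
        (fun i : Fin N => ((0 : Fin 2), (0 : Fin 2), (0 : Fin 2), i))
        (fun j : Fin N => ((0 : Fin 2), (0 : Fin 2), (0 : Fin 2), j))
      = Lneu N := by
  rw [key N hL]
  unfold sandwich TQ Tmat E00' ELL' EL0' E0L'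
  simp only [Matrix.kronecker_add, Matrix.add_kronecker, kron_sub, sub_kron,
    Matrix.mul_add, Matrix.add_mul, mul_sub, sub_mul,
    ← Matrix.mul_kronecker_mul, Matrix.one_mul, Matrix.mul_one]
  simp only [Matrix.submatrix_add, Matrix.submatrix_sub, Pi.add_apply, Pi.sub_apply, blk]
  rw [HP0ZH_00, HP1ZH_00]
  simp only [Matrix.one_apply_eq, Xgate_00, zero_mul, mul_zero, zero_smul, one_mul]
  unfold Lneu Ldir Lper
  module

end final

/-- `U_n` is unitary and is an exact (1,3,0)-block encoding of the scaled 1D Neumann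
Laplacian: `(⟨0|⊗⟨0|⊗⟨0|⊗I) U_n (|0⟩⊗|0⟩⊗|0⟩⊗I) = L̃_n`. -/
theorem un_block_encodes_neumann_laplacian (n : ℕ) (hn : 1 ≤ n) :
    Un (2 ^ n) ∈ Matrix.unitaryGroup (Fin 2 × Fin 2 × Fin 2 × Fin (2 ^ n)) ℂ ∧
    (Un (2 ^ n)).submatrix
        (fun i : Fin (2 ^ n) => ((0 : Fin 2), (0 : Fin 2), (0 : Fin 2), i))
        (fun j : Fin (2 ^ n) => ((0 : Fin 2), (0 : Fin 2), (0 : Fin 2), j))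
      = Lneu (2 ^ n) := by
  have h2 : 2 ≤ 2 ^ n := by
    calc 2 = 2 ^ 1 := by norm_num
    _ ≤ 2 ^ n := Nat.pow_le_pow_right (by norm_num) hn
  have hL : fLast (2 ^ n) ≠ 0 := by
    intro h
    have := congrArg Fin.val h
    simp [fLast] at this
    omega
  exact ⟨Un_mem (2 ^ n), block (2 ^ n) hL⟩
end
end

section
/- For every j with 1 ≤ j ≤ N−2, the unitary U_n satisfies (⟨0|⊗⟨0|⊗⟨0|⊗I_N) U_n (|0⟩⊗|0⟩⊗|0⟩⊗e_j) = (1/4)(e_{j−1} − 2 e_j + e_{j+1}). -/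
open Matrix
open scoped Kronecker

noncomputable section

/-- The standard basis vector `e_i` of `ℂ^N`. -/
def eVec (N : ℕ) (i : Fin N) : Fin N → ℂ := Pi.single i 1


section Aux
variable (N : ℕ) [NeZero N]

/-- basis vector of the full space -/
def bv (N : ℕ) [NeZero N] (d a b : Fin 2) (k : Fin N) : Fin 2 × Fin 2 × Fin 2 × Fin N → ℂ :=
  Pi.single (d, a, b, k) 1

lemma sq2 : ((1 / Real.sqrt 2 : ℝ) : ℂ) * ((1 / Real.sqrt 2 : ℝ) : ℂ) = 1 / 2 := by
  rw [← Complex.ofReal_mul]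
  rw [div_mul_div_comm, Real.mul_self_sqrt (by norm_num)]
  norm_num

lemma hs_col (a b : Fin 2) (k : Fin N) :
    (sandwich N Hgate).mulVec (bv N 0 a b k) =
      (1 / 2 : ℂ) • (bv N 0 0 0 k
        + ((-1 : ℂ) ^ (b : ℕ)) • bv N 0 0 1 k
        + ((-1 : ℂ) ^ (a : ℕ)) • bv N 0 1 0 k
        + ((-1 : ℂ) ^ ((a : ℕ) + (b : ℕ))) • bv N 0 1 1 k) := by
  funext r
  obtain ⟨d, l1, l0, i⟩ := r
  rw [bv, Matrix.mulVec_single]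
  simp only [sandwich, Hgate, bv, Matrix.kroneckerMap_apply, Matrix.one_apply, Pi.smul_apply,
    Pi.add_apply, Pi.single_apply, Prod.mk.injEq, smul_eq_mul, Matrix.smul_apply]
  have h2 : ((Real.sqrt 2 : ℝ) : ℂ) ^ 2 = 2 := by
    rw [← Complex.ofReal_pow, Real.sq_sqrt (by norm_num)]; norm_num
  fin_cases d <;> fin_cases l1 <;> fin_cases l0 <;> fin_cases a <;> fin_cases b <;>
    simp [sq2, Matrix.cons_val_zero, Matrix.cons_val_one, Matrix.one_apply] <;> split_ifs <;> (try ring_nf) <;> (try push_cast) <;>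
    (try simp [inv_pow, h2]) <;> (try norm_num)

lemma zs_col (a b : Fin 2) (k : Fin N) :
    (sandwich N Zgate).mulVec (bv N 0 a b k) =
      ((-1 : ℂ) ^ ((a : ℕ) + (b : ℕ))) • bv N 0 a b k := by
  funext r
  obtain ⟨d, l1, l0, i⟩ := r
  rw [bv, Matrix.mulVec_single]
  simp only [sandwich, Zgate, bv, Matrix.kroneckerMap_apply, Matrix.one_apply, Pi.smul_apply,
    Pi.single_apply, Prod.mk.injEq, smul_eq_mul]
  fin_cases d <;> fin_cases l1 <;> fin_cases l0 <;> fin_cases a <;> fin_cases b <;>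
    simp [Matrix.one_apply] <;> split_ifs <;> (try ring_nf) <;> simp_all [Matrix.one_apply]

lemma fctrl_fix {α : Type*} [DecidableEq α] [Fintype α] (Q : Matrix α α ℂ) (d : Fin 2) (q : α)
    (hq : ∀ r, Q r q = 0) :
    (Fctrl Q).mulVec (Pi.single (d, q) 1) = Pi.single (d, q) 1 := by
  funext r
  obtain ⟨d', q'⟩ := r
  rw [Matrix.mulVec_single]
  simp only [Fctrl, Matrix.add_apply, Matrix.kroneckerMap_apply, Matrix.sub_apply, hq,
    Matrix.one_apply, Pi.single_apply, Prod.mk.injEq, mul_one, mul_zero, sub_zero]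
  split_ifs <;> simp_all [Xgate, Matrix.one_apply] <;> fin_cases d' <;> simp_all [Matrix.one_apply] <;> tauto

lemma b00_fix (a b : Fin 2) (k : Fin N) (hk : k ≠ 0) :
    (B00 N).mulVec (bv N 0 a b k) = bv N 0 a b k := by
  refine fctrl_fix _ _ _ (fun r => ?_)
  obtain ⟨r1, r2, r3⟩ := r
  simp [Matrix.kroneckerMap_apply, Matrix.single, Ne.symm hk]

lemma b01_fix (a b : Fin 2) (k : Fin N) (hk : k ≠ 0) :
    (B01 N).mulVec (bv N 0 a b k) = bv N 0 a b k := by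
  refine fctrl_fix _ _ _ (fun r => ?_)
  obtain ⟨r1, r2, r3⟩ := r
  simp [Matrix.kroneckerMap_apply, Matrix.single, Ne.symm hk]

lemma b11l_fix (a b : Fin 2) (k : Fin N) (hk : k ≠ fLast N) :
    (B11L N).mulVec (bv N 0 a b k) = bv N 0 a b k := by
  refine fctrl_fix _ _ _ (fun r => ?_)
  obtain ⟨r1, r2, r3⟩ := r
  simp [Matrix.kroneckerMap_apply, Matrix.single, Ne.symm hk]

lemma b01l_fix (a b : Fin 2) (k : Fin N) (hk : k ≠ fLast N) :
    (B01L N).mulVec (bv N 0 a b k) = bv N 0 a b k := by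
  refine fctrl_fix _ _ _ (fun r => ?_)
  obtain ⟨r1, r2, r3⟩ := r
  simp [Matrix.kroneckerMap_apply, Matrix.single, Ne.symm hk]

lemma cm_col0 (b : Fin 2) (k : Fin N) :
    (Cminus3 N).mulVec (bv N 0 0 b k) = bv N 0 0 b (k - 1) := by
  funext r
  obtain ⟨d, l1, l0, i⟩ := r
  rw [bv, Matrix.mulVec_single]
  simp only [Cminus3, Sm, P0, P1, bv, Matrix.kroneckerMap_apply, Matrix.add_apply,
    Matrix.one_apply, Matrix.of_apply, Pi.single_apply, Prod.mk.injEq]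
  fin_cases d <;> fin_cases l1 <;> fin_cases l0 <;> fin_cases b <;>
    simp [Matrix.one_apply] <;> split_ifs <;> simp_all [Matrix.one_apply]

lemma cm_col1 (b : Fin 2) (k : Fin N) :
    (Cminus3 N).mulVec (bv N 0 1 b k) = bv N 0 1 b k := by
  funext r
  obtain ⟨d, l1, l0, i⟩ := r
  rw [bv, Matrix.mulVec_single]
  simp only [Cminus3, Sm, P0, P1, bv, Matrix.kroneckerMap_apply, Matrix.add_apply,
    Matrix.one_apply, Matrix.of_apply, Pi.single_apply, Prod.mk.injEq]
  fin_cases d <;> fin_cases l1 <;> fin_cases l0 <;> fin_cases b <;>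
    simp [Matrix.one_apply] <;> split_ifs <;> simp_all [Matrix.one_apply]

lemma cp_col0 (a : Fin 2) (k : Fin N) :
    (Cplus3 N).mulVec (bv N 0 a 0 k) = bv N 0 a 0 k := by
  funext r
  obtain ⟨d, l1, l0, i⟩ := r
  rw [bv, Matrix.mulVec_single]
  simp only [Cplus3, Sp, P0, P1, bv, Matrix.kroneckerMap_apply, Matrix.add_apply,
    Matrix.one_apply, Matrix.of_apply, Pi.single_apply, Prod.mk.injEq]
  fin_cases d <;> fin_cases l1 <;> fin_cases l0 <;> fin_cases a <;>
    simp [Matrix.one_apply] <;> split_ifs <;> simp_all [Matrix.one_apply]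

lemma cp_col1 (a : Fin 2) (k : Fin N) :
    (Cplus3 N).mulVec (bv N 0 a 1 k) = bv N 0 a 1 (k + 1) := by
  funext r
  obtain ⟨d, l1, l0, i⟩ := r
  rw [bv, Matrix.mulVec_single]
  simp only [Cplus3, Sp, P0, P1, bv, Matrix.kroneckerMap_apply, Matrix.add_apply,
    Matrix.one_apply, Matrix.of_apply, Pi.single_apply, Prod.mk.injEq]
  fin_cases d <;> fin_cases l1 <;> fin_cases l0 <;> fin_cases a <;>
    simp [Matrix.one_apply] <;> split_ifs <;> simp_all [Matrix.one_apply]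

end Aux

set_option maxRecDepth 8000 in
lemma un_aux (N : ℕ) [NeZero N] (j : ℕ) (h1 : 1 ≤ j) (h2 : j + 1 < N)
    (hj : j < N) (hjm : j - 1 < N) (hjp : j + 1 < N) :
    (fun i : Fin N => Un N ((0 : Fin 2), (0 : Fin 2), (0 : Fin 2), i)
        ((0 : Fin 2), (0 : Fin 2), (0 : Fin 2), (⟨j, hj⟩ : Fin N)))
      = (1 / 4 : ℂ) • (eVec N ⟨j - 1, hjm⟩ - (2 : ℂ) • eVec N ⟨j, hj⟩ + eVec N ⟨j + 1, hjp⟩) := by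
  set jm : Fin N := ⟨j - 1, hjm⟩ with hjm'
  set jf : Fin N := ⟨j, hj⟩ with hjf'
  set jp : Fin N := ⟨j + 1, hjp⟩ with hjp'
  have hN3 : 3 ≤ N := by omega
  have hone : ((1 : Fin N) : ℕ) = 1 := by
    rw [Fin.val_one']
    exact Nat.mod_eq_of_lt (by omega)
  have hjf0 : jf ≠ 0 := by
    simp only [hjf', Ne, Fin.ext_iff, Fin.val_zero]
    omega
  have hjfL : jf ≠ fLast N := by
    simp only [hjf', fLast, Ne, Fin.ext_iff]
    omega
  have hadd1 : jm + 1 = jf := by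
    apply Fin.ext
    rw [Fin.add_def, hone]
    simp only [hjm', hjf']
    rw [show j - 1 + 1 = j from by omega]
    exact Nat.mod_eq_of_lt hj
  have hadd2 : jf + 1 = jp := by
    apply Fin.ext
    rw [Fin.add_def, hone]
    simp only [hjf', hjp']
    exact Nat.mod_eq_of_lt hjp
  have hsub : jf - 1 = jm := by
    rw [← hadd1]
    exact add_sub_cancel_right jm 1
  have hb00 : ∀ a b : Fin 2, (B00 N).mulVec (bv N 0 a b jf) = bv N 0 a b jf :=
    fun a b => b00_fix N a b jf hjf0
  have hb01 : ∀ a b : Fin 2, (B01 N).mulVec (bv N 0 a b jf) = bv N 0 a b jf :=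
    fun a b => b01_fix N a b jf hjf0
  have hb11 : ∀ a b : Fin 2, (B11L N).mulVec (bv N 0 a b jf) = bv N 0 a b jf :=
    fun a b => b11l_fix N a b jf hjfL
  have hb01L : ∀ a b : Fin 2, (B01L N).mulVec (bv N 0 a b jf) = bv N 0 a b jf :=
    fun a b => b01l_fix N a b jf hjfL
  funext i
  have hv : Un N ((0 : Fin 2), (0 : Fin 2), (0 : Fin 2), i) ((0 : Fin 2), (0 : Fin 2), (0 : Fin 2), jf)
      = ((Un N).mulVec (bv N 0 0 0 jf)) ((0 : Fin 2), (0 : Fin 2), (0 : Fin 2), i) := by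
    rw [bv, Matrix.mulVec_single]
    exact (mul_one _).symm
  rw [hv, Un]
  simp only [← Matrix.mulVec_mulVec]
  rw [hs_col]
  simp only [Matrix.mulVec_smul, Matrix.mulVec_add, Fin.val_zero, Fin.val_one, pow_zero,
    pow_one, one_smul, Nat.add_zero]
  rw [zs_col, zs_col, zs_col, zs_col]
  simp only [Matrix.mulVec_smul, Matrix.mulVec_add, Fin.val_zero, Fin.val_one, pow_zero,
    pow_one, one_smul, Nat.add_zero, Nat.zero_add]
  rw [hb00, hb00, hb00, hb00]
  rw [hb01, hb01, hb01, hb01]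
  rw [hb11, hb11, hb11, hb11]
  rw [hb01L, hb01L, hb01L, hb01L]
  rw [cm_col0, cm_col0, cm_col1, cm_col1, hsub]
  rw [cp_col0, cp_col0, cp_col1, cp_col1, hadd1, hadd2]
  rw [hs_col, hs_col, hs_col, hs_col]
  simp only [bv, eVec, Pi.smul_apply, Pi.add_apply, Pi.sub_apply, Pi.neg_apply,
    Pi.single_apply, Prod.mk.injEq, smul_eq_mul]
  have h01 : ¬ ((0 : Fin 2) = 1) := by decide
  simp only [h01, false_and, and_false, true_and, and_true, if_false, mul_zero, add_zero,
    Fin.val_zero, Fin.val_one, pow_zero, pow_one, one_mul, mul_one]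
  norm_num
  simp only [hjm', hjf', hjp', Fin.ext_iff]
  split_ifs <;> norm_num <;> omega

/-- For interior points `1 ≤ j ≤ N−2`,
`(⟨0|⊗⟨0|⊗⟨0|⊗I) U_n (|0⟩⊗|0⟩⊗|0⟩⊗e_j) = (1/4)(e_{j−1} − 2e_j + e_{j+1})`. -/
theorem un_interior_action (n : ℕ) (hn : 1 ≤ n) (j : ℕ) (hj1 : 1 ≤ j) (hj2 : j ≤ 2 ^ n - 2) :
    (fun i : Fin (2 ^ n) =>
        Un (2 ^ n) ((0 : Fin 2), (0 : Fin 2), (0 : Fin 2), i)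
          ((0 : Fin 2), (0 : Fin 2), (0 : Fin 2), (⟨j, by omega⟩ : Fin (2 ^ n))))
      = (1 / 4 : ℂ) •
          (eVec (2 ^ n) ⟨j - 1, by omega⟩
            - (2 : ℂ) • eVec (2 ^ n) ⟨j, by omega⟩
            + eVec (2 ^ n) ⟨j + 1, by omega⟩) := by
  have hN : 2 ≤ 2 ^ n := by
    calc 2 = 2 ^ 1 := (pow_one 2).symm
    _ ≤ 2 ^ n := Nat.pow_le_pow_right (by norm_num) hn
  exact un_aux (2 ^ n) j hj1 (by omega) (by omega) (by omega) (by omega)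
end
end
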